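/- Let $n, p$ be positive natural numbers. Assume: $k_x \in \mathbb{R}^{n \times n}$ is symmetric with $x^{\mathsf T} k_x x \ge \underline{k_x}\|x\|^2$ for all $x$, where $\underline{k_x} > 0$; $S \in \mathbb{R}^{p \times p}$ is symmetric with $\theta^{\mathsf T} S \theta \ge \underline{y}\|\theta\|^2$ for all $\theta$, where $\underline{y} > 0$; $k_\theta > 0$; $\Gamma \in \mathbb{R}^{p \times p}$ is symmetric invertible and $\underline{\gamma}\|\theta\|^2 \le \theta^{\mathsf T}\Gamma^{-1}\theta \le \overline{\gamma}\|\theta\|^2$ for all $\theta$ with $0 < \underline{\gamma} \le \overline{\gamma}$. Let $Y : \mathbb{R} \to \mathbb{R}^{n \times p}$ be any function and let $\tilde{x} : \mathbb{R} \to \mathbb{R}^n$, $\tilde{\theta} : \mathbb{R} \to \mathbb{R}^p$ be differentiable with $\tilde{x}'(t) = Y(t)\tilde{\theta}(t) - k_x\tilde{x}(t)$ and $\tilde{\theta}'(t) = -\Gamma Y(t)^{\mathsf T}\tilde{x}(t) - k_\theta \Gamma S \tilde{\theta}(t)$. Set $v = \min(\underline{k_x}, \underline{y}\,k_\theta)$,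 $\underline{v} = \tfrac{1}{2}\min(1,\underline{\gamma})$, $\overline{v} = \tfrac{1}{2}\max(1,\overline{\gamma})$, and $V_0(t) = \tfrac{1}{2}\tilde{x}(t)^{\mathsf T}\tilde{x}(t) + \tfrac{1}{2}\tilde{\theta}(t)^{\mathsf T}\Gamma^{-1}\tilde{\theta}(t)$. Then for all $t \ge 0$: $V_0(t) \le V_0(0)\,e^{-(v/\overline{v})t}$, and consequently $\|\tilde{x}(t)\|^2 + \|\tilde{\theta}(t)\|^2 \le \frac{\overline{v}}{\underline{v}}\left(\|\tilde{x}(0)\|^2 + \|\tilde{\theta}(0)\|^2\right) e^{-(v/\overline{v})t}$; in particular $\tilde{x}(t) \to 0$ and $\tilde{\theta}(t) \to 0$ exponentially fast as $t \to \infty$. -/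

import Mathlib

open Matrix Filter

lemma myNormSq {m : ℕ} (x : EuclideanSpace ℝ (Fin m)) : ‖x‖ ^ 2 = x ⬝ᵥ x := by
  rw [EuclideanSpace.norm_sq_eq]
  simp [dotProduct, ← sq]

lemma coordDeriv {m : ℕ} {f : ℝ → EuclideanSpace ℝ (Fin m)} {f' : EuclideanSpace ℝ (Fin m)}
    {t : ℝ} (hf : HasDerivAt f f' t) (i : Fin m) :
    HasDerivAt (fun s => f s i) (f' i) t := by
  have := (EuclideanSpace.proj (𝕜 := ℝ) i).hasFDerivAt.comp_hasDerivAt t hf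
  exact this

lemma dotDeriv {m : ℕ} {a b : ℝ → Fin m → ℝ} {a' b' : Fin m → ℝ} {t : ℝ}
    (ha : ∀ i, HasDerivAt (fun s => a s i) (a' i) t)
    (hb : ∀ i, HasDerivAt (fun s => b s i) (b' i) t) :
    HasDerivAt (fun s => a s ⬝ᵥ b s) (a' ⬝ᵥ b t + a t ⬝ᵥ b') t := by
  simp only [dotProduct]
  have := HasDerivAt.fun_sum (u := Finset.univ) (fun i _ => ((ha i).mul (hb i)))
  convert this using 1
  · rfl
  · rfl
  · rfl
  rw [← Finset.sum_add_distrib]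

lemma mulVecCoordDeriv {m q : ℕ} (A : Matrix (Fin q) (Fin m) ℝ) {g : ℝ → Fin m → ℝ}
    {g' : Fin m → ℝ} {t : ℝ} (hg : ∀ i, HasDerivAt (fun s => g s i) (g' i) t) (i : Fin q) :
    HasDerivAt (fun s => (A *ᵥ g s) i) ((A *ᵥ g') i) t := by
  simp only [mulVec, dotProduct]
  exact HasDerivAt.fun_sum (fun j _ => (hg j).const_mul (A i j))

lemma tendstoAux {m : ℕ} (f : ℝ → EuclideanSpace ℝ (Fin m)) (C c : ℝ) (hc : 0 < c)
    (hb : ∀ t : ℝ, 0 ≤ t → ‖f t‖ ^ 2 ≤ C * Real.exp (-c * t)) :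
    Tendsto f atTop (nhds 0) := by
  rw [tendsto_zero_iff_norm_tendsto_zero]
  have h1 : Tendsto (fun t : ℝ => c * t) atTop atTop :=
    Tendsto.const_mul_atTop hc tendsto_id
  have h2 : Tendsto (fun t : ℝ => Real.exp (-c * t)) atTop (nhds 0) := by
    simp only [neg_mul, Real.exp_neg]
    exact Tendsto.inv_tendsto_atTop (Real.tendsto_exp_atTop.comp h1)
  have hlim : Tendsto (fun t : ℝ => C * Real.exp (-c * t)) atTop (nhds 0) := by
    simpa using h2.const_mul C
  have hsq : Tendsto (fun t => ‖f t‖ ^ 2) atTop (nhds 0) :=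
    squeeze_zero' (Eventually.of_forall fun t => sq_nonneg _)
      (by filter_upwards [eventually_ge_atTop (0:ℝ)] with t ht; exact hb t ht) hlim
  have h3 := (Real.continuous_sqrt.tendsto 0).comp hsq
  simp only [Function.comp_def, Real.sqrt_zero] at h3
  exact h3.congr fun t => Real.sqrt_sq (norm_nonneg _)

set_option maxHeartbeats 1000000 in
theorem statement3 (n p : ℕ) (hn : 0 < n) (hp : 0 < p)
    (kx : Matrix (Fin n) (Fin n) ℝ) (hkxsymm : kx.IsSymm)
    (kxlo : ℝ) (hkxlo : 0 < kxlo)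
    (hkx : ∀ x : EuclideanSpace ℝ (Fin n), kxlo * ‖x‖ ^ 2 ≤ x ⬝ᵥ kx *ᵥ x)
    (S : Matrix (Fin p) (Fin p) ℝ) (hSsymm : S.IsSymm)
    (ylo : ℝ) (hylo : 0 < ylo)
    (hS : ∀ θ : EuclideanSpace ℝ (Fin p), ylo * ‖θ‖ ^ 2 ≤ θ ⬝ᵥ S *ᵥ θ)
    (kθ : ℝ) (hkθ : 0 < kθ)
    (Γ : Matrix (Fin p) (Fin p) ℝ) (hΓsymm : Γ.IsSymm) (hΓinv : IsUnit Γ.det)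
    (γlo γhi : ℝ) (hγlo : 0 < γlo) (hγ : γlo ≤ γhi)
    (hΓbound : ∀ θ : EuclideanSpace ℝ (Fin p),
      γlo * ‖θ‖ ^ 2 ≤ θ ⬝ᵥ Γ⁻¹ *ᵥ θ ∧ θ ⬝ᵥ Γ⁻¹ *ᵥ θ ≤ γhi * ‖θ‖ ^ 2)
    (Y : ℝ → Matrix (Fin n) (Fin p) ℝ)
    (xTilde : ℝ → EuclideanSpace ℝ (Fin n)) (θTilde : ℝ → EuclideanSpace ℝ (Fin p))
    (hx : ∀ t : ℝ, HasDerivAt xTilde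
      (WithLp.toLp 2 (Y t *ᵥ θTilde t - kx *ᵥ xTilde t) : EuclideanSpace ℝ (Fin n)) t)
    (hθ : ∀ t : ℝ, HasDerivAt θTilde
      (WithLp.toLp 2 (-(Γ *ᵥ ((Y t)ᵀ *ᵥ xTilde t)) - kθ • (Γ *ᵥ (S *ᵥ θTilde t))) :
        EuclideanSpace ℝ (Fin p)) t)
    (v vlo vhi : ℝ) (hv : v = min kxlo (ylo * kθ))
    (hvlo : vlo = (1 / 2) * min 1 γlo) (hvhi : vhi = (1 / 2) * max 1 γhi)
    (V0 : ℝ → ℝ)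
    (hV0 : V0 = fun t =>
      (1 / 2) * (xTilde t ⬝ᵥ xTilde t) + (1 / 2) * (θTilde t ⬝ᵥ Γ⁻¹ *ᵥ θTilde t)) :
    (∀ t : ℝ, 0 ≤ t →
      V0 t ≤ V0 0 * Real.exp (-(v / vhi) * t) ∧
      ‖xTilde t‖ ^ 2 + ‖θTilde t‖ ^ 2 ≤
        (vhi / vlo) * (‖xTilde 0‖ ^ 2 + ‖θTilde 0‖ ^ 2) * Real.exp (-(v / vhi) * t)) ∧
    Tendsto xTilde atTop (nhds 0) ∧ Tendsto θTilde atTop (nhds 0) := by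
  have hvhi0 : 0 < vhi := by
    rw [hvhi]; have := le_max_left (1:ℝ) γhi; linarith
  have hvlo0 : 0 < vlo := by
    rw [hvlo]; have := lt_min one_pos hγlo; linarith
  have hv0 : 0 < v := by rw [hv]; exact lt_min hkxlo (mul_pos hylo hkθ)
  set c : ℝ := v / vhi with hcdef
  have hc : 0 < c := div_pos hv0 hvhi0
  have hcv : c * vhi = v := div_mul_cancel₀ v (ne_of_gt hvhi0)
  -- the derivative of V0
  set D : ℝ → ℝ := fun t =>
    -(xTilde t ⬝ᵥ kx *ᵥ xTilde t) - kθ * (θTilde t ⬝ᵥ S *ᵥ θTilde t) with hD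
  have hVd : ∀ t : ℝ, HasDerivAt V0 (D t) t := by
    intro t
    have hΓsymm' : (Γ⁻¹)ᵀ = Γ⁻¹ := by rw [Matrix.transpose_nonsing_inv, hΓsymm]
    have hGinvG : ∀ u : Fin p → ℝ, Γ⁻¹ *ᵥ (Γ *ᵥ u) = u := by
      intro u
      rw [Matrix.mulVec_mulVec, Matrix.nonsing_inv_mul Γ hΓinv, Matrix.one_mulVec]
    have hxc := fun i => coordDeriv (hx t) i
    have hθc := fun i => coordDeriv (hθ t) i
    set x : Fin n → ℝ := (xTilde t).ofLp with hxdef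
    set θt : Fin p → ℝ := (θTilde t).ofLp with hθdef
    set x' : Fin n → ℝ := (WithLp.toLp 2 (Y t *ᵥ θTilde t - kx *ᵥ xTilde t) : EuclideanSpace ℝ (Fin n)).ofLp with hx'
    set θ' : Fin p → ℝ :=
      (WithLp.toLp 2 (-(Γ *ᵥ ((Y t)ᵀ *ᵥ xTilde t)) - kθ • (Γ *ᵥ (S *ᵥ θTilde t))) :
        EuclideanSpace ℝ (Fin p)).ofLp with hθ'
    have hx'eq : x' = Y t *ᵥ θt - kx *ᵥ x := rfl
    have hθ'eq : θ' = -(Γ *ᵥ ((Y t)ᵀ *ᵥ x)) - kθ • (Γ *ᵥ (S *ᵥ θt)) := rfl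
    have hG := fun i => mulVecCoordDeriv Γ⁻¹ hθc i
    have D1 := dotDeriv hxc hxc
    have D2 := dotDeriv hθc hG
    have key := ((D1.const_mul ((1:ℝ)/2)).add (D2.const_mul ((1:ℝ)/2)))
    rw [hV0]
    convert key using 1
    · rfl
    · rfl
    · rfl
    have e1 : x' ⬝ᵥ x = x ⬝ᵥ x' := dotProduct_comm _ _
    have e2 : x ⬝ᵥ x' = θt ⬝ᵥ ((Y t)ᵀ *ᵥ x) - x ⬝ᵥ (kx *ᵥ x) := by
      rw [hx'eq, dotProduct_sub, dotProduct_mulVec, ← Matrix.mulVec_transpose,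
        dotProduct_comm]
    have e3 : Γ⁻¹ *ᵥ θ' = -((Y t)ᵀ *ᵥ x) - kθ • (S *ᵥ θt) := by
      rw [hθ'eq, Matrix.mulVec_sub, Matrix.mulVec_neg, Matrix.mulVec_smul, hGinvG, hGinvG]
    have e4 : θ' ⬝ᵥ (Γ⁻¹ *ᵥ θt) = θt ⬝ᵥ (Γ⁻¹ *ᵥ θ') := by
      rw [dotProduct_mulVec, ← Matrix.mulVec_transpose, hΓsymm', dotProduct_comm]
    have e5 : θt ⬝ᵥ (Γ⁻¹ *ᵥ θ') = -(θt ⬝ᵥ ((Y t)ᵀ *ᵥ x)) - kθ * (θt ⬝ᵥ (S *ᵥ θt)) := by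
      rw [e3, dotProduct_sub, dotProduct_neg, dotProduct_smul, smul_eq_mul]
    rw [e1, e2, e4, e5]
    ring
  -- bounds on V0
  have hupp : ∀ t : ℝ, V0 t ≤ vhi * (‖xTilde t‖ ^ 2 + ‖θTilde t‖ ^ 2) := by
    intro t
    have h3 := (hΓbound (θTilde t)).2
    have hxx : xTilde t ⬝ᵥ xTilde t = ‖xTilde t‖ ^ 2 := (myNormSq _).symm
    have h4 : (1:ℝ) ≤ 2 * vhi := by rw [hvhi]; have := le_max_left (1:ℝ) γhi; linarith
    have h5 : γhi ≤ 2 * vhi := by rw [hvhi]; have := le_max_right (1:ℝ) γhi; linarith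
    have hn1 : (0:ℝ) ≤ ‖xTilde t‖ ^ 2 := sq_nonneg _
    have hn2 : (0:ℝ) ≤ ‖θTilde t‖ ^ 2 := sq_nonneg _
    rw [hV0]; simp only [hxx]; nlinarith
  have hlow : ∀ t : ℝ, vlo * (‖xTilde t‖ ^ 2 + ‖θTilde t‖ ^ 2) ≤ V0 t := by
    intro t
    have h3 := (hΓbound (θTilde t)).1
    have hxx : xTilde t ⬝ᵥ xTilde t = ‖xTilde t‖ ^ 2 := (myNormSq _).symm
    have h4 : 2 * vlo ≤ 1 := by rw [hvlo]; have := min_le_left (1:ℝ) γlo; linarith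
    have h5 : 2 * vlo ≤ γlo := by rw [hvlo]; have := min_le_right (1:ℝ) γlo; linarith
    have hn1 : (0:ℝ) ≤ ‖xTilde t‖ ^ 2 := sq_nonneg _
    have hn2 : (0:ℝ) ≤ ‖θTilde t‖ ^ 2 := sq_nonneg _
    rw [hV0]; simp only [hxx]; nlinarith
  have hDle : ∀ t : ℝ, D t ≤ -c * V0 t := by
    intro t
    have h1 := hkx (xTilde t)
    have h2 := hS (θTilde t)
    have hu := hupp t
    have hv1 : v ≤ kxlo := by rw [hv]; exact min_le_left _ _
    have hv2 : v ≤ ylo * kθ := by rw [hv]; exact min_le_right _ _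
    have hn1 : (0:ℝ) ≤ ‖xTilde t‖ ^ 2 := sq_nonneg _
    have hn2 : (0:ℝ) ≤ ‖θTilde t‖ ^ 2 := sq_nonneg _
    have hmul : c * V0 t ≤ c * (vhi * (‖xTilde t‖ ^ 2 + ‖θTilde t‖ ^ 2)) :=
      mul_le_mul_of_nonneg_left hu hc.le
    have hcvs : c * (vhi * (‖xTilde t‖ ^ 2 + ‖θTilde t‖ ^ 2)) =
        v * (‖xTilde t‖ ^ 2 + ‖θTilde t‖ ^ 2) := by rw [← mul_assoc, hcv]
    show -(xTilde t ⬝ᵥ kx *ᵥ xTilde t) - kθ * (θTilde t ⬝ᵥ S *ᵥ θTilde t) ≤ -c * V0 t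
    nlinarith [mul_le_mul_of_nonneg_right hv1 hn1, mul_le_mul_of_nonneg_right hv2 hn2,
      mul_le_mul_of_nonneg_left h2 hkθ.le]
  -- Gronwall via monotonicity
  set g : ℝ → ℝ := fun t => V0 t * Real.exp (c * t) with hgdef
  have hexp : ∀ t : ℝ, HasDerivAt (fun s => Real.exp (c * s)) (Real.exp (c * t) * c) t := by
    intro t
    simpa using ((hasDerivAt_id t).const_mul c).exp
  have hg : ∀ t : ℝ, HasDerivAt g (D t * Real.exp (c * t) + V0 t * (Real.exp (c * t) * c)) t :=
    fun t => (hVd t).mul (hexp t)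
  have hanti : Antitone g := by
    apply antitone_of_deriv_nonpos (fun t => (hg t).differentiableAt)
    intro t
    rw [(hg t).deriv]
    have h := hDle t
    have he := Real.exp_pos (c * t)
    nlinarith [mul_le_mul_of_nonneg_right (by linarith : D t + c * V0 t ≤ 0) he.le]
  have hmain : ∀ t : ℝ, 0 ≤ t → V0 t ≤ V0 0 * Real.exp (-c * t) := by
    intro t ht
    have hgt : V0 t * Real.exp (c * t) ≤ V0 0 := by
      have h := hanti ht
      simpa [hgdef, Real.exp_zero] using h
    have he := Real.exp_pos (c * t)
    rw [neg_mul, Real.exp_neg]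
    calc V0 t ≤ V0 0 / Real.exp (c * t) := (le_div_iff₀ he).mpr hgt
      _ = V0 0 * (Real.exp (c * t))⁻¹ := div_eq_mul_inv _ _
  have hmain2 : ∀ t : ℝ, 0 ≤ t →
      ‖xTilde t‖ ^ 2 + ‖θTilde t‖ ^ 2 ≤
        (vhi / vlo) * (‖xTilde 0‖ ^ 2 + ‖θTilde 0‖ ^ 2) * Real.exp (-c * t) := by
    intro t ht
    have h1 := hlow t
    have h2 := hmain t ht
    have h3 := hupp 0
    have he := Real.exp_pos (-c * t)
    have h4 : V0 0 * Real.exp (-c * t) ≤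
        vhi * (‖xTilde 0‖ ^ 2 + ‖θTilde 0‖ ^ 2) * Real.exp (-c * t) :=
      mul_le_mul_of_nonneg_right h3 he.le
    have h5 : vlo * (‖xTilde t‖ ^ 2 + ‖θTilde t‖ ^ 2) ≤
        vhi * (‖xTilde 0‖ ^ 2 + ‖θTilde 0‖ ^ 2) * Real.exp (-c * t) := by linarith
    rw [← mul_le_mul_iff_right₀ hvlo0]
    calc vlo * (‖xTilde t‖ ^ 2 + ‖θTilde t‖ ^ 2)
        ≤ vhi * (‖xTilde 0‖ ^ 2 + ‖θTilde 0‖ ^ 2) * Real.exp (-c * t) := h5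
      _ = vlo * ((vhi / vlo) * (‖xTilde 0‖ ^ 2 + ‖θTilde 0‖ ^ 2) * Real.exp (-c * t)) := by
          field_simp
  refine ⟨fun t ht => ⟨hmain t ht, hmain2 t ht⟩, ?_, ?_⟩
  · apply tendstoAux xTilde ((vhi / vlo) * (‖xTilde 0‖ ^ 2 + ‖θTilde 0‖ ^ 2)) c hc
    intro t ht
    have := hmain2 t ht
    nlinarith [sq_nonneg ‖θTilde t‖]
  · apply tendstoAux θTilde ((vhi / vlo) * (‖xTilde 0‖ ^ 2 + ‖θTilde 0‖ ^ 2)) c hc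
    intro t ht
    have := hmain2 t ht
    nlinarith [sq_nonneg ‖xTilde t‖]
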